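/- Suppose b ∈ C_j^{(N_2, r)} for some 0 ≤ j ≤ N_2 − 1 and Tr_{r/q}(a) ∈ C_l^{(N_2/d_2, q)} for some 0 ≤ l ≤ N_2/d_2 − 1. Then the Hamming weight of c(a, b) equals (q−1)n_2/q − (1/q) · Σ_{i=0}^{N_2/d_2 − 1} η_{N_0 i + j}^{(N_2, r)} η_{i + l}^{(N_2/d_2, q)} (equality after casting the weight into ℂ; indices read modulo N_2 and modulo N_2/d_2 respectively). -/

import Mathlib

/-- The canonical additive character `ψ(x) = e^{2πi·Tr_{F/F_p}(x)/p}` of a finite field `F`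
of characteristic `p`. -/
noncomputable def psi (p : ℕ) (F : Type*) [Field F] [Fintype F] [Algebra (ZMod p) F]
    (x : F) : ℂ :=
  Complex.exp (2 * (Real.pi : ℂ) * Complex.I * ((Algebra.trace (ZMod p) F x).val : ℂ) / (p : ℂ))

/-- The cyclotomic class `C_i^{(N,r)} = α^i ⟨α^N⟩` in a finite field. -/
def cClass (F : Type*) [Field F] (α : Fˣ) (N i : ℕ) : Set F :=
  {x | ∃ t : ℕ, x = ((α ^ (i + N * t) : Fˣ) : F)}

/-- The Gauss period `η_i^{(N,r)} = Σ_{x ∈ C_i^{(N,r)}} ψ(x)`. -/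
noncomputable def gaussPeriod (p : ℕ) (F : Type*) [Field F] [Fintype F] [Algebra (ZMod p) F]
    (α : Fˣ) (N i : ℕ) : ℂ :=
  ∑ t ∈ Finset.range ((Fintype.card F - 1) / N), psi p F ((α ^ (i + N * t) : Fˣ) : F)

section Aux

variable {p : ℕ} [Fact p.Prime] {F : Type*} [Field F] [Fintype F] [Algebra (ZMod p) F]

lemma zeta_pow_p (hp : (p:ℂ) ≠ 0) : (Complex.exp (2 * (Real.pi : ℂ) * Complex.I / p)) ^ p = 1 := by
  rw [← Complex.exp_nat_mul, mul_div_cancel₀ _ hp, Complex.exp_two_pi_mul_I]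

lemma psi_eq_zeta_pow (x : F) :
    psi p F x = (Complex.exp (2 * (Real.pi : ℂ) * Complex.I / p)) ^ (Algebra.trace (ZMod p) F x).val := by
  rw [psi, ← Complex.exp_nat_mul]
  ring_nf

lemma zeta_pow_mod (hp : (p:ℂ) ≠ 0) (a : ℕ) :
    (Complex.exp (2 * (Real.pi : ℂ) * Complex.I / p)) ^ (a % p)
      = (Complex.exp (2 * (Real.pi : ℂ) * Complex.I / p)) ^ a := by
  conv_rhs => rw [← Nat.div_add_mod a p]
  rw [pow_add, pow_mul, zeta_pow_p hp, one_pow, one_mul]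

lemma psi_zero : psi p F 0 = 1 := by
  simp [psi]

lemma psi_add (x y : F) : psi p F (x + y) = psi p F x * psi p F y := by
  have hp : (p:ℂ) ≠ 0 := by
    exact_mod_cast (Fact.out : p.Prime).ne_zero
  haveI : NeZero p := ⟨(Fact.out : p.Prime).ne_zero⟩
  rw [psi_eq_zeta_pow, psi_eq_zeta_pow, psi_eq_zeta_pow, map_add, ZMod.val_add,
    zeta_pow_mod hp, pow_add]

/-- nontriviality of psi at an element of nonzero trace -/
lemma psi_ne_one {x : F} (hx : Algebra.trace (ZMod p) F x ≠ 0) : psi p F x ≠ 1 := by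
  have hp1 : 1 < p := (Fact.out : p.Prime).one_lt
  haveI : NeZero p := ⟨(Fact.out : p.Prime).ne_zero⟩
  set v := (Algebra.trace (ZMod p) F x).val with hv
  have hvpos : 0 < v := Nat.pos_of_ne_zero (by
    intro h
    exact hx (by rwa [← ZMod.val_eq_zero]))
  have hvlt : v < p := ZMod.val_lt _
  rw [psi]
  intro h
  rw [Complex.exp_eq_one_iff] at h
  obtain ⟨n, hn⟩ := h
  have hp : (p:ℂ) ≠ 0 := by exact_mod_cast (Nat.zero_lt_of_lt hp1).ne'
  have h2 : (2 * (Real.pi:ℂ) * Complex.I) ≠ 0 := by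
    simp [Real.pi_ne_zero, Complex.I_ne_zero]
  have hveq : (v:ℂ) = (n:ℂ) * p := by
    rw [div_eq_iff hp] at hn
    have : (2 * (Real.pi:ℂ) * Complex.I) * (v:ℂ) = (2 * (Real.pi:ℂ) * Complex.I) * ((n:ℂ) * p) := by
      linear_combination hn
    exact mul_left_cancel₀ h2 this
  have hint : (v:ℤ) = n * p := by exact_mod_cast hveq
  have hdvd : (p:ℤ) ∣ (v:ℤ) := ⟨n, by linarith [hint]⟩
  have : p ∣ v := by exact_mod_cast hdvd
  have := Nat.le_of_dvd hvpos this
  omega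

end Aux

section SumLemmas

lemma sum_shift (h : ℕ → ℂ) (n c : ℕ) (hper : ∀ t, h (t + n) = h t) :
    ∑ t ∈ Finset.range n, h (t + c) = ∑ t ∈ Finset.range n, h t := by
  induction c with
  | zero => simp
  | succ c ih =>
    have base : ∀ (g : ℕ → ℂ), (∀ t, g (t + n) = g t) →
        ∑ t ∈ Finset.range n, g (t + 1) = ∑ t ∈ Finset.range n, g t := by
      intro g hg
      have h1 : ∑ t ∈ Finset.range (n+1), g t = ∑ t ∈ Finset.range n, g (t+1) + g 0 :=
        Finset.sum_range_succ' g n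
      have h2 : ∑ t ∈ Finset.range (n+1), g t = ∑ t ∈ Finset.range n, g t + g n :=
        Finset.sum_range_succ g n
      have h3 : g n = g 0 := by simpa using hg 0
      rw [h3] at h2
      exact add_right_cancel (h1.symm.trans h2)
    calc ∑ t ∈ Finset.range n, h (t + (c+1))
        = ∑ t ∈ Finset.range n, (fun x => h (x + c)) (t + 1) := by
          apply Finset.sum_congr rfl; intro t _; simp only []; ring_nf
      _ = ∑ t ∈ Finset.range n, h (t + c) := by
          apply base (fun x => h (x + c))
          intro t
          have := hper (t + c)
          simpa [add_right_comm] using this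
      _ = ∑ t ∈ Finset.range n, h t := ih

lemma per_mod (h : ℕ → ℂ) (n : ℕ) (hper : ∀ t, h (t + n) = h t) (t : ℕ) :
    h (t % n) = h t := by
  have key : ∀ d t', h (t' + n * d) = h t' := by
    intro d
    induction d with
    | zero => simp
    | succ d ih =>
      intro t'
      have : t' + n * (d+1) = (t' + n * d) + n := by ring
      rw [this, hper, ih]
  conv_rhs => rw [← Nat.div_add_mod t n]
  rw [Nat.add_comm]
  exact (key (t / n) (t % n)).symm

lemma sum_coprime_mul (h : ℕ → ℂ) (n k : ℕ) (hn : 0 < n) (hk : Nat.gcd k n = 1)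
    (hper : ∀ t, h (t + n) = h t) :
    ∑ t ∈ Finset.range n, h (k * t) = ∑ t ∈ Finset.range n, h t := by
  have hmod := per_mod h n hper
  have step : ∀ t, h (k * t) = h (k * t % n) := fun t => (hmod (k*t)).symm
  simp_rw [step]
  apply Finset.sum_bij (fun t (_ : t ∈ Finset.range n) => k * t % n)
  · intro a ha
    exact Finset.mem_range.mpr (Nat.mod_lt _ hn)
  · intro a1 h1 a2 h2 heq
    have : a1 ≡ a2 [MOD n] := by
      apply Nat.ModEq.cancel_left_of_coprime (c := k)
      · rwa [Nat.gcd_comm] at hk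
      · exact heq
    rw [Nat.ModEq] at this
    rw [Nat.mod_eq_of_lt (Finset.mem_range.mp h1), Nat.mod_eq_of_lt (Finset.mem_range.mp h2)] at this
    exact this
  · intro b hb
    rcases Nat.lt_or_ge 1 n with hn1 | hn1
    · obtain ⟨c, -, hc⟩ := Nat.exists_mul_mod_eq_one_of_coprime hk hn1
      refine ⟨c * b % n, Finset.mem_range.mpr (Nat.mod_lt _ hn), ?_⟩
      have h1 : k * (c * b % n) % n = k * (c * b) % n := by
        conv_lhs => rw [Nat.mul_mod]
        conv_rhs => rw [Nat.mul_mod]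
        rw [Nat.mod_mod_of_dvd _ dvd_rfl]
      rw [h1, ← mul_assoc, Nat.mul_mod, hc, one_mul, Nat.mod_mod_of_dvd _ dvd_rfl,
        Nat.mod_eq_of_lt (Finset.mem_range.mp hb)]
    · obtain rfl : n = 1 := by omega
      obtain rfl : b = 0 := by have := Finset.mem_range.mp hb; omega
      exact ⟨0, Finset.mem_range.mpr Nat.zero_lt_one, by simp⟩
  · intro a ha
    rfl

lemma sum_range_mul_split (f : ℕ → ℂ) (M n : ℕ) (hM : 0 < M) :
    ∑ w ∈ Finset.range (M * n), f w
      = ∑ i ∈ Finset.range M, ∑ u ∈ Finset.range n, f (M * u + i) := by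
  have hprod : ∑ x ∈ Finset.range M ×ˢ Finset.range n, f (M * x.2 + x.1)
      = ∑ i ∈ Finset.range M, ∑ u ∈ Finset.range n, f (M * u + i) :=
    Finset.sum_product _ _ _
  rw [← hprod]
  apply Finset.sum_bij (fun (w : ℕ) (_ : w ∈ Finset.range (M*n)) => (w % M, w / M))
  · intro w hw
    rw [Finset.mem_range] at hw
    refine Finset.mem_product.mpr ⟨Finset.mem_range.mpr (Nat.mod_lt _ hM), Finset.mem_range.mpr ?_⟩
    rw [Nat.div_lt_iff_lt_mul hM, Nat.mul_comm]
    exact hw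
  · intro a1 h1 a2 h2 heq
    rw [Prod.mk.injEq] at heq
    have h1' := Nat.div_add_mod a1 M
    have h2' := Nat.div_add_mod a2 M
    rw [← heq.1, ← heq.2] at h2'
    omega
  · intro b hb
    obtain ⟨b1, b2⟩ := b
    rw [Finset.mem_product, Finset.mem_range, Finset.mem_range] at hb
    refine ⟨M * b2 + b1, Finset.mem_range.mpr ?_, ?_⟩
    · calc M * b2 + b1 < M * b2 + M := by omega
        _ = M * (b2 + 1) := by ring
        _ ≤ M * n := Nat.mul_le_mul_left M (by omega)
    · have hm : (M * b2 + b1) % M = b1 := by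
        rw [Nat.add_comm, Nat.add_mul_mod_self_left, Nat.mod_eq_of_lt hb.1]
      have hd : (M * b2 + b1) / M = b2 := by
        rw [Nat.add_comm, Nat.add_mul_div_left _ _ hM, Nat.div_eq_of_lt hb.1, Nat.zero_add]
      rw [Prod.mk.injEq]
      exact ⟨hm, hd⟩
  · intro w hw
    conv_lhs => rw [← Nat.div_add_mod w M]

lemma exists_pow_eq_of_mem_zpowers {G : Type*} [Group G] {α x : G} (hα : 0 < orderOf α)
    (hx : x ∈ Subgroup.zpowers α) : ∃ e, e < orderOf α ∧ x = α ^ e := by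
  obtain ⟨z, hz⟩ := hx
  have hz' : α ^ z = x := hz
  refine ⟨(z % (orderOf α : ℤ)).toNat, ?_, ?_⟩
  · have h1 : 0 ≤ z % (orderOf α : ℤ) := Int.emod_nonneg z (by exact_mod_cast hα.ne')
    have h2 : z % (orderOf α : ℤ) < orderOf α := Int.emod_lt_of_pos z (by exact_mod_cast hα)
    omega
  · have h1 : 0 ≤ z % (orderOf α : ℤ) := Int.emod_nonneg z (by exact_mod_cast hα.ne')
    rw [← hz', ← zpow_mod_orderOf α z]
    rw [← zpow_natCast, Int.toNat_of_nonneg h1]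

end SumLemmas

section Char

variable (p : ℕ) [Fact p.Prime] (K : Type*) [Field K] [Fintype K] [Algebra (ZMod p) K]

lemma exists_trace_ne_zero : ∃ y : K, Algebra.trace (ZMod p) K y ≠ 0 := by
  haveI : CharP K p := charP_of_injective_algebraMap (algebraMap (ZMod p) K).injective p
  have hch : ringChar K = p := ringChar.eq K p
  subst hch
  obtain ⟨y, hy⟩ := FiniteField.trace_to_zmod_nondegenerate K (one_ne_zero (α := K))
  exact ⟨1 * y, hy⟩

lemma sum_psi : ∑ y : K, psi p K y = 0 := by
  obtain ⟨y₀, hy₀⟩ := exists_trace_ne_zero p K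
  have hne : psi p K y₀ ≠ 1 := psi_ne_one hy₀
  have key : ∑ y : K, psi p K (y + y₀) = ∑ y : K, psi p K y :=
    Fintype.sum_equiv (Equiv.addRight y₀) _ _ (fun y => rfl)
  have key2 : (∑ y : K, psi p K y) * psi p K y₀ = ∑ y : K, psi p K y := by
    rw [Finset.sum_mul]
    simp_rw [← psi_add]
    exact key
  by_contra h
  exact hne (mul_left_cancel₀ h (key2.trans (mul_one _).symm))

lemma sum_psi_mul [DecidableEq K] (z : K) :
    ∑ y : K, psi p K (y * z) = if z = 0 then (Fintype.card K : ℂ) else 0 := by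
  by_cases hz : z = 0
  · subst hz
    simp [psi_zero, Finset.card_univ]
  · rw [if_neg hz]
    have heq : ∑ y : K, psi p K (y * z) = ∑ y : K, psi p K y :=
      Fintype.sum_equiv (Equiv.mulRight₀ z hz) _ _ (fun y => rfl)
    rw [heq, sum_psi]

end Char

lemma sum_units_pow {K : Type*} [Field K] [Fintype K] [DecidableEq K] (β : Kˣ)
    (hord : orderOf β = Fintype.card K - 1) (f : K → ℂ) :
    ∑ w ∈ Finset.range (Fintype.card K - 1), f ((β ^ w : Kˣ) : K)
      = ∑ y ∈ Finset.univ.erase (0 : K), f y := by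
  have hq2 : 1 < Fintype.card K := Fintype.one_lt_card
  have hpos : 0 < orderOf β := by rw [hord]; omega
  apply Finset.sum_bij (fun w (_ : w ∈ Finset.range (Fintype.card K - 1)) => ((β ^ w : Kˣ) : K))
  · intro w hw
    exact Finset.mem_erase.mpr ⟨Units.ne_zero _, Finset.mem_univ _⟩
  · intro w1 h1 w2 h2 heq
    have : (β ^ w1 : Kˣ) = β ^ w2 := Units.ext heq
    exact pow_injOn_Iio_orderOf (by rw [hord]; exact Finset.mem_range.mp h1)
      (by rw [hord]; exact Finset.mem_range.mp h2) this
  · intro y hy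
    have hy0 : y ≠ 0 := (Finset.mem_erase.mp hy).1
    have htop : Subgroup.zpowers β = ⊤ :=
      Subgroup.eq_top_of_card_eq _ (by
        rw [Nat.card_zpowers, hord, Nat.card_eq_fintype_card, Fintype.card_units])
    obtain ⟨w, hwlt, hwe⟩ := exists_pow_eq_of_mem_zpowers hpos
      (by rw [htop]; trivial : Units.mk0 y hy0 ∈ Subgroup.zpowers β)
    refine ⟨w, Finset.mem_range.mpr (by rwa [hord] at hwlt), ?_⟩
    rw [← hwe]
    rfl
  · intro w hw
    rfl

/-- if `b ∈ C_j^{(N₂,r)}` and `Tr_{r/q}(a) ∈ C_l^{(N₂/d₂,q)}`, the weight of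
`c(a,b)` is `(q-1)n₂/q - (1/q) Σ_{i=0}^{N₂/d₂-1} η_{N₀i+j}^{(N₂,r)} η_{i+l}^{(N₂/d₂,q)}`. -/
theorem stmt10 (p s m : ℕ) [Fact p.Prime] (hs : 0 < s) (hm : 0 < m)
    (K F : Type*) [Field K] [Fintype K] [DecidableEq K] [Field F] [Fintype F]
    [Algebra (ZMod p) K] [Algebra (ZMod p) F] [Algebra K F]
    (hq : Fintype.card K = p ^ s) (hr : Fintype.card F = Fintype.card K ^ m)
    (α : Fˣ) (hα : ∀ x : Fˣ, x ∈ Subgroup.zpowers α)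
    (β : Kˣ)
    (hβ : algebraMap K F (β : K)
        = ((α ^ ((Fintype.card F - 1) / (Fintype.card K - 1)) : Fˣ) : F))
    (g₂ : Fˣ) (n₂ : ℕ) (h₂ : orderOf g₂ = n₂)
    (N₀ N₂ d₂ : ℕ)
    (hN₀ : N₀ = (Fintype.card F - 1) / (Fintype.card K - 1))
    (hN₂ : N₂ = (Fintype.card F - 1) / n₂)
    (hd₂ : d₂ = Nat.gcd N₀ N₂)
    (a b : F) (j l : ℕ) (hj : j < N₂) (hl : l < N₂ / d₂)
    (hb : b ∈ cClass F α N₂ j)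
    (ha : Algebra.trace K F a ∈ cClass K β (N₂ / d₂) l) :
    (hammingNorm (fun t : Fin n₂ =>
        Algebra.trace K F (a + b * (g₂ : F) ^ (t : ℕ))) : ℂ)
      = ((Fintype.card K : ℂ) - 1) * (n₂ : ℂ) / (Fintype.card K : ℂ)
        - (1 / (Fintype.card K : ℂ))
          * ∑ i ∈ Finset.range (N₂ / d₂),
              gaussPeriod p F α N₂ (N₀ * i + j) * gaussPeriod p K β (N₂ / d₂) (i + l) := by
  classical
  haveI : IsScalarTower (ZMod p) K F := IsScalarTower.of_algebraMap_eq' (RingHom.ext_zmod _ _)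
  rw [← hN₀] at hβ
  set M := N₂ / d₂ with hMdef
  -- numerics
  have hq2 : 1 < Fintype.card K := Fintype.one_lt_card
  have hr2 : 1 < Fintype.card F := Fintype.one_lt_card
  have hordα : orderOf α = Fintype.card F - 1 := by
    rw [orderOf_eq_card_of_forall_mem_zpowers hα, Nat.card_eq_fintype_card, Fintype.card_units]
  have hn₂pos : 0 < n₂ := h₂ ▸ orderOf_pos g₂
  have hn₂dvd : n₂ ∣ Fintype.card F - 1 := by
    rw [← h₂, ← Fintype.card_units (α := F)]
    exact orderOf_dvd_card
  have hN₂n₂ : N₂ * n₂ = Fintype.card F - 1 := by rw [hN₂]; exact Nat.div_mul_cancel hn₂dvd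
  have hN₂pos : 0 < N₂ := by
    rcases Nat.eq_zero_or_pos N₂ with h | h
    · rw [h, zero_mul] at hN₂n₂; omega
    · exact h
  have hq1dvd : Fintype.card K - 1 ∣ Fintype.card F - 1 := by
    have := Nat.sub_dvd_pow_sub_pow (Fintype.card K) 1 m
    rwa [one_pow, ← hr] at this
  have hN₀q : N₀ * (Fintype.card K - 1) = Fintype.card F - 1 := by
    rw [hN₀]; exact Nat.div_mul_cancel hq1dvd
  have hN₀pos : 0 < N₀ := by
    rcases Nat.eq_zero_or_pos N₀ with h | h
    · rw [h, zero_mul] at hN₀q; omega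
    · exact h
  have hN₀dvd : N₀ ∣ Fintype.card F - 1 := ⟨Fintype.card K - 1, hN₀q.symm⟩
  have hN₂dvd : N₂ ∣ Fintype.card F - 1 := ⟨n₂, hN₂n₂.symm⟩
  have hd₂N₀ : d₂ ∣ N₀ := hd₂ ▸ Nat.gcd_dvd_left _ _
  have hd₂N₂ : d₂ ∣ N₂ := hd₂ ▸ Nat.gcd_dvd_right _ _
  have hd₂pos : 0 < d₂ := by
    rw [hd₂]; exact Nat.gcd_pos_of_pos_left _ hN₀pos
  have hd₂M : d₂ * M = N₂ := by rw [hMdef]; exact Nat.mul_div_cancel' hd₂N₂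
  have hMpos : 0 < M := by
    rcases Nat.eq_zero_or_pos M with h | h
    · rw [h, mul_zero] at hd₂M; omega
    · exact h
  obtain ⟨n₀', hn₀'⟩ := hd₂N₀
  have hlcm : N₀ * M = N₂ * n₀' := by rw [hn₀', ← hd₂M]; ring
  have hcop : Nat.Coprime M n₀' := by
    have h0 : 0 < N₂.gcd N₀ := by rw [Nat.gcd_comm, ← hd₂]; exact hd₂pos
    have hthis := Nat.coprime_div_gcd_div_gcd h0
    have hg : N₂.gcd N₀ = d₂ := by rw [Nat.gcd_comm, ← hd₂]
    rw [hg] at hthis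
    have hn0 : N₀ / d₂ = n₀' := by rw [hn₀']; exact Nat.mul_div_cancel_left _ hd₂pos
    rw [hn0] at hthis
    exact hthis
  have hMq : M ∣ Fintype.card K - 1 := by
    have h1 : N₂ ∣ N₀ * (Fintype.card K - 1) := by rw [hN₀q]; exact hN₂dvd
    obtain ⟨c, hc⟩ := h1
    have h2 : n₀' * (Fintype.card K - 1) = M * c := by
      have h3 : d₂ * (n₀' * (Fintype.card K - 1)) = d₂ * (M * c) := by
        rw [← mul_assoc, ← hn₀', hc, ← mul_assoc, hd₂M]
      exact Nat.eq_of_mul_eq_mul_left hd₂pos h3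
    exact hcop.dvd_of_dvd_mul_right ⟨c, by rw [mul_comm, h2]⟩
  set m₂ := (Fintype.card K - 1) / M with hm₂def
  have hMm₂ : M * m₂ = Fintype.card K - 1 := by rw [hm₂def]; exact Nat.mul_div_cancel' hMq
  have hm₂pos : 0 < m₂ := by
    rcases Nat.eq_zero_or_pos m₂ with h | h
    · rw [h, mul_zero] at hMm₂; omega
    · exact h
  -- β has order q - 1
  have hβunit : Units.map (algebraMap K F).toMonoidHom β = α ^ N₀ :=
    Units.ext (by simpa using hβ)
  have hordβ : orderOf β = Fintype.card K - 1 := by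
    have h1 := orderOf_injective (Units.map (algebraMap K F).toMonoidHom)
      (Units.map_injective (algebraMap K F).injective) β
    rw [hβunit, orderOf_pow, hordα, Nat.gcd_eq_right hN₀dvd] at h1
    rw [← h1, ← hN₀q, Nat.mul_div_cancel_left _ hN₀pos]
  -- g₂ = α ^ (N₂ * k) with gcd(k, n₂) = 1
  have hαpos : 0 < orderOf α := by rw [hordα]; omega
  obtain ⟨e, helt, hge⟩ := exists_pow_eq_of_mem_zpowers hαpos (hα g₂)
  have horde : orderOf α / (orderOf α).gcd e = n₂ := by rw [← orderOf_pow, ← hge, h₂]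
  rw [hordα] at horde
  have hgdvd : (Fintype.card F - 1).gcd e ∣ Fintype.card F - 1 := Nat.gcd_dvd_left _ _
  have hgn₂ : (Fintype.card F - 1).gcd e * n₂ = Fintype.card F - 1 := by
    rw [← horde]; exact Nat.mul_div_cancel' hgdvd
  have hgN₂ : (Fintype.card F - 1).gcd e = N₂ :=
    Nat.eq_of_mul_eq_mul_right hn₂pos (by rw [hgn₂, hN₂n₂])
  have hN₂e : N₂ ∣ e := hgN₂ ▸ Nat.gcd_dvd_right _ _
  obtain ⟨k, hek⟩ := hN₂e
  have hkcop : Nat.gcd k n₂ = 1 := by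
    have h1 : (Fintype.card F - 1).gcd e = N₂ * Nat.gcd n₂ k := by
      rw [← hN₂n₂, hek, Nat.gcd_mul_left]
    rw [hgN₂] at h1
    have h2 : N₂ * 1 = N₂ * Nat.gcd n₂ k := by rw [mul_one]; exact h1
    have h3 := Nat.eq_of_mul_eq_mul_left hN₂pos h2
    rw [Nat.gcd_comm]
    omega
  have hg₂ : g₂ = α ^ (N₂ * k) := by rw [← hek]; exact hge
  -- unpack classes
  obtain ⟨t₀, hbt⟩ := hb
  obtain ⟨s₀, has⟩ := ha
  -- helper identities
  have hχΨ : ∀ v : F, psi p K (Algebra.trace K F v) = psi p F v := by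
    intro v
    simp only [psi]
    rw [Algebra.trace_trace]
  have hαe : ∀ {e1 e2 : ℕ}, e1 = e2 → ((α ^ e1 : Fˣ) : F) = ((α ^ e2 : Fˣ) : F) := by
    intro e1 e2 h; rw [h]
  have hβe : ∀ {e1 e2 : ℕ}, e1 = e2 → ((β ^ e1 : Kˣ) : K) = ((β ^ e2 : Kˣ) : K) := by
    intro e1 e2 h; rw [h]
  have hαper : ∀ e1 : ℕ, ((α ^ (e1 + (Fintype.card F - 1)) : Fˣ) : F) = ((α ^ e1 : Fˣ) : F) := by
    intro e1; rw [pow_add, ← hordα, pow_orderOf_eq_one, mul_one]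
  have hβper : ∀ e1 : ℕ, ((β ^ (e1 + (Fintype.card K - 1)) : Kˣ) : K) = ((β ^ e1 : Kˣ) : K) := by
    intro e1; rw [pow_add, ← hordβ, pow_orderOf_eq_one, mul_one]
  have hnF : (Fintype.card F - 1) / N₂ = n₂ := by
    rw [← hN₂n₂, Nat.mul_div_cancel_left _ hN₂pos]
  have hGF : ∀ i' : ℕ, gaussPeriod p F α N₂ i'
      = ∑ t ∈ Finset.range n₂, psi p F ((α ^ (i' + N₂ * t) : Fˣ) : F) := by
    intro i'; rw [gaussPeriod, hnF]
  have hGK : ∀ i' : ℕ, gaussPeriod p K β M i'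
      = ∑ u ∈ Finset.range m₂, psi p K ((β ^ (i' + M * u) : Kˣ) : K) := by
    intro i'; rw [gaussPeriod, ← hm₂def]
  -- counting zeros
  set Z := (Finset.univ.filter
    (fun t : Fin n₂ => Algebra.trace K F (a + b * (g₂ : F) ^ (t : ℕ)) = 0)).card with hZdef
  have hWZn : hammingNorm (fun t : Fin n₂ => Algebra.trace K F (a + b * (g₂ : F) ^ (t : ℕ))) + Z
      = n₂ := by
    have h1 := Finset.card_filter_add_card_filter_not
      (s := (Finset.univ : Finset (Fin n₂)))
      (p := fun t : Fin n₂ => Algebra.trace K F (a + b * (g₂ : F) ^ (t : ℕ)) = 0)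
    rw [Finset.card_univ, Fintype.card_fin] at h1
    have h2 : hammingNorm (fun t : Fin n₂ => Algebra.trace K F (a + b * (g₂ : F) ^ (t : ℕ)))
        = (Finset.univ.filter
            (fun t : Fin n₂ => ¬ (Algebra.trace K F (a + b * (g₂ : F) ^ (t : ℕ)) = 0))).card := by
      simp [hammingNorm, ne_eq]
    rw [h2, hZdef]
    omega
  have hWZ : (hammingNorm (fun t : Fin n₂ => Algebra.trace K F (a + b * (g₂ : F) ^ (t : ℕ))) : ℂ)
      = (n₂ : ℂ) - (Z : ℂ) := by
    have := congrArg (fun x : ℕ => (x : ℂ)) hWZn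
    push_cast at this
    linear_combination this
  -- orthogonality: the double character sum counts zeros
  have hA : ∑ t ∈ Finset.range n₂, ∑ y : K,
        psi p K (y * Algebra.trace K F (a + b * (g₂ : F) ^ t))
      = (Fintype.card K : ℂ) * (Z : ℂ) := by
    rw [← Fin.sum_univ_eq_sum_range
      (fun t => ∑ y : K, psi p K (y * Algebra.trace K F (a + b * (g₂ : F) ^ t))) n₂]
    have h1 : ∀ t : Fin n₂, ∑ y : K,
        psi p K (y * Algebra.trace K F (a + b * (g₂ : F) ^ (t : ℕ)))
        = if Algebra.trace K F (a + b * (g₂ : F) ^ (t : ℕ)) = 0 then (Fintype.card K : ℂ) else 0 :=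
      fun t => sum_psi_mul p K _
    rw [Finset.sum_congr rfl (fun t _ => h1 t), Finset.sum_ite, Finset.sum_const,
      Finset.sum_const_zero, add_zero, hZdef, nsmul_eq_mul, mul_comm]
  -- pointwise character splitting
  have hpoint : ∀ (t : ℕ) (y : K),
      psi p K (y * Algebra.trace K F (a + b * (g₂ : F) ^ t))
        = psi p K (y * Algebra.trace K F a)
          * psi p F (algebraMap K F y * (b * (g₂ : F) ^ t)) := by
    intro t y
    rw [map_add, mul_add, psi_add]
    congr 1
    rw [show y * Algebra.trace K F (b * (g₂ : F) ^ t)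
        = Algebra.trace K F (y • (b * (g₂ : F) ^ t)) by
      rw [map_smul, smul_eq_mul]]
    rw [hχΨ, Algebra.smul_def]
  -- inner sum over the subgroup generated by g₂
  have hinner : ∀ w : ℕ,
      ∑ t ∈ Finset.range n₂, psi p F (algebraMap K F ((β ^ w : Kˣ) : K) * (b * (g₂ : F) ^ t))
      = ∑ t ∈ Finset.range n₂, psi p F ((α ^ ((N₀ * w + j) + N₂ * t) : Fˣ) : F) := by
    intro w
    have hterm : ∀ t : ℕ, algebraMap K F ((β ^ w : Kˣ) : K) * (b * (g₂ : F) ^ t)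
        = ((α ^ ((N₀ * w + j) + N₂ * (t₀ + k * t)) : Fˣ) : F) := by
      intro t
      rw [Units.val_pow_eq_pow_val, map_pow, hβ, hbt, hg₂]
      rw [← Units.val_pow_eq_pow_val, ← Units.val_pow_eq_pow_val ((α ^ (N₂ * k))) t,
        ← pow_mul, ← pow_mul]
      rw [← Units.val_mul, ← Units.val_mul, ← pow_add, ← pow_add]
      exact hαe (by ring)
    rw [Finset.sum_congr rfl (fun t _ => by rw [hterm t])]
    have hper1 : ∀ x : ℕ, psi p F ((α ^ ((N₀ * w + j) + N₂ * (x + n₂)) : Fˣ) : F)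
        = psi p F ((α ^ ((N₀ * w + j) + N₂ * x) : Fˣ) : F) := by
      intro x
      exact congrArg (psi p F) (by
        rw [show (N₀ * w + j) + N₂ * (x + n₂) = ((N₀ * w + j) + N₂ * x) + N₂ * n₂ by ring,
          hN₂n₂]
        exact hαper _)
    have hs := sum_coprime_mul
      (fun x => psi p F ((α ^ ((N₀ * w + j) + N₂ * (t₀ + x)) : Fˣ) : F)) n₂ k hn₂pos hkcop
      (fun x => by
        rw [show t₀ + (x + n₂) = (t₀ + x) + n₂ by ring]
        exact hper1 _)
    have ht := sum_shift
      (fun x => psi p F ((α ^ ((N₀ * w + j) + N₂ * x) : Fˣ) : F)) n₂ t₀ hper1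
    rw [hs, ← ht]
    exact Finset.sum_congr rfl (fun t _ => by rw [Nat.add_comm t₀ t])
  -- the full double sum
  have hB : ∑ t ∈ Finset.range n₂, ∑ y : K,
        psi p K (y * Algebra.trace K F (a + b * (g₂ : F) ^ t))
      = (n₂ : ℂ) + ∑ i ∈ Finset.range M,
          gaussPeriod p F α N₂ (N₀ * i + j) * gaussPeriod p K β M (i + l) := by
    simp only [hpoint]
    rw [Finset.sum_comm]
    simp only [← Finset.mul_sum]
    rw [← Finset.add_sum_erase _ _ (Finset.mem_univ (0 : K))]
    congr 1
    · simp [psi_zero]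
    rw [← sum_units_pow β hordβ
      (fun y => psi p K (y * Algebra.trace K F a)
        * ∑ t ∈ Finset.range n₂, psi p F (algebraMap K F y * (b * (g₂ : F) ^ t)))]
    simp only [hinner]
    rw [← hMm₂, sum_range_mul_split _ M m₂ hMpos]
    apply Finset.sum_congr rfl
    intro i _
    -- inner t-sum is independent of u
    have hFi : ∀ u : ℕ,
        ∑ t ∈ Finset.range n₂, psi p F ((α ^ ((N₀ * (M * u + i) + j) + N₂ * t) : Fˣ) : F)
        = gaussPeriod p F α N₂ (N₀ * i + j) := by
      intro u
      rw [hGF]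
      have hcong : ∀ t : ℕ, ((α ^ ((N₀ * (M * u + i) + j) + N₂ * t) : Fˣ) : F)
          = ((α ^ ((N₀ * i + j) + N₂ * (t + n₀' * u)) : Fˣ) : F) := by
        intro t
        refine hαe ?_
        calc N₀ * (M * u + i) + j + N₂ * t = N₀ * M * u + (N₀ * i + j + N₂ * t) := by ring
          _ = N₂ * n₀' * u + (N₀ * i + j + N₂ * t) := by rw [hlcm]
          _ = (N₀ * i + j) + N₂ * (t + n₀' * u) := by ring
      rw [Finset.sum_congr rfl (fun t _ => by rw [hcong t])]
      have hper3 : ∀ x : ℕ, psi p F ((α ^ ((N₀ * i + j) + N₂ * (x + n₂)) : Fˣ) : F)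
          = psi p F ((α ^ ((N₀ * i + j) + N₂ * x) : Fˣ) : F) := by
        intro x
        exact congrArg (psi p F) (by
          rw [show (N₀ * i + j) + N₂ * (x + n₂) = ((N₀ * i + j) + N₂ * x) + N₂ * n₂ by ring,
            hN₂n₂]
          exact hαper _)
      have ht := sum_shift
        (fun x => psi p F ((α ^ ((N₀ * i + j) + N₂ * x) : Fˣ) : F)) n₂ (n₀' * u) hper3
      exact ht.trans (by
        apply Finset.sum_congr rfl
        intro t _
        rfl)
    rw [Finset.sum_congr rfl (fun u _ => by rw [hFi u]), ← Finset.sum_mul, mul_comm]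
    congr 1
    -- outer u-sum gives the K-side Gauss period
    rw [hGK]
    have hcong2 : ∀ u : ℕ, ((β ^ (M * u + i) : Kˣ) : K) * Algebra.trace K F a
        = ((β ^ ((i + l) + M * (u + s₀)) : Kˣ) : K) := by
      intro u
      rw [has, ← Units.val_mul, ← pow_add]
      exact hβe (by ring)
    rw [Finset.sum_congr rfl (fun u _ => by rw [hcong2 u])]
    have hper4 : ∀ x : ℕ, psi p K ((β ^ ((i + l) + M * (x + m₂)) : Kˣ) : K)
        = psi p K ((β ^ ((i + l) + M * x) : Kˣ) : K) := by
      intro x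
      exact congrArg (psi p K) (by
        rw [show (i + l) + M * (x + m₂) = ((i + l) + M * x) + M * m₂ by ring, hMm₂]
        exact hβper _)
    have ht := sum_shift
      (fun x => psi p K ((β ^ ((i + l) + M * x) : Kˣ) : K)) m₂ s₀ hper4
    rw [← ht]
  -- conclude
  have hq0 : (Fintype.card K : ℂ) ≠ 0 := Nat.cast_ne_zero.mpr (by omega)
  have hqZ : (Fintype.card K : ℂ) * (Z : ℂ)
      = (n₂ : ℂ) + ∑ i ∈ Finset.range M,
          gaussPeriod p F α N₂ (N₀ * i + j) * gaussPeriod p K β M (i + l) :=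
    hA.symm.trans hB
  rw [hWZ]
  field_simp
  linear_combination -hqZ
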